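/- arXiv:1108.5889 — 4 statements merged into one kernel-verified Lean document; each statement's English description precedes it below -/
import Mathlib

section
/- Let K be the convex hull of a finite set S of points in a finite-dimensional inner product space with 0 ∉ K, and let μ ∈ K be the element of minimal norm. Then for every nonzero vector λ, one has (min_{x ∈ S}(x, λ))/‖λ‖ ≤ ‖μ‖, with equality when λ = μ. In particular μ maximises the function λ ↦ m(λ)/‖λ‖ where m(λ) = min_{x ∈ K}(x, λ). -/
open scoped RealInnerProductSpace

/-- let `K` be the convex hull of a finite set `S` in a
finite-dimensional real inner product space with `0 ∉ K`, and let `μ ∈ K` be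
the element of minimal norm.  Then for every nonzero `λ` one has
`(min_{x ∈ S} (x, λ)) / ‖λ‖ ≤ ‖μ‖`, with equality for `λ = μ`; in particular
`μ` maximises `λ ↦ m(λ)/‖λ‖` where `m(λ) = min_{x ∈ K} (x, λ)`. -/
theorem stmt4 {E : Type*} [NormedAddCommGroup E] [InnerProductSpace ℝ E]
    [FiniteDimensional ℝ E] (S : Finset E) (hS : S.Nonempty)
    (h0 : (0 : E) ∉ convexHull ℝ (S : Set E)) (μ : E)
    (hμK : μ ∈ convexHull ℝ (S : Set E))
    (hmin : ∀ x ∈ convexHull ℝ (S : Set E), ‖μ‖ ≤ ‖x‖) :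
    (∀ lam : E, lam ≠ 0 → (S.inf' hS fun x => ⟪x, lam⟫) / ‖lam‖ ≤ ‖μ‖) ∧
      (S.inf' hS fun x => ⟪x, μ⟫) / ‖μ‖ = ‖μ‖ := by
  have hμ0 : μ ≠ 0 := fun h => h0 (h ▸ hμK)
  have hμn : (0:ℝ) < ‖μ‖ := norm_pos_iff.mpr hμ0
  -- Step A: inf over S of ⟪·, lam⟫ is ≤ value at any point of the hull
  have stepA : ∀ lam : E, ∀ y ∈ convexHull ℝ (S : Set E),
      (S.inf' hS fun x => ⟪x, lam⟫) ≤ ⟪y, lam⟫ := by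
    intro lam y hy
    have hlin : IsLinearMap ℝ (fun z : E => ⟪z, lam⟫) :=
      ⟨fun a b => inner_add_left a b lam, fun c x => real_inner_smul_left x lam c⟩
    have hconv : Convex ℝ {z : E | (S.inf' hS fun x => ⟪x, lam⟫) ≤ ⟪z, lam⟫} :=
      convex_halfSpace_ge hlin _
    have hsub : (S : Set E) ⊆ {z : E | (S.inf' hS fun x => ⟪x, lam⟫) ≤ ⟪z, lam⟫} :=
      fun x hx => by exact Finset.inf'_le (fun z : E => ⟪z, lam⟫) hx
    exact convexHull_min hsub hconv hy
  -- Step B: variational inequality ‖μ‖² ≤ ⟪x, μ⟫ for x in the hull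
  have stepB : ∀ x ∈ convexHull ℝ (S : Set E), ‖μ‖ ^ 2 ≤ ⟪x, μ⟫ := by
    have hK : Convex ℝ (convexHull ℝ (S : Set E)) := convex_convexHull ℝ _
    haveI : Nonempty ↑(convexHull ℝ (S : Set E)) := ⟨⟨μ, hμK⟩⟩
    have hd : ‖(0:E) - μ‖ = ⨅ w : convexHull ℝ (S : Set E), ‖(0:E) - w‖ := by
      refine le_antisymm (le_ciInf fun w => ?_) ?_
      · simpa using hmin w w.2
      · refine ciInf_le ?_ (⟨μ, hμK⟩ : convexHull ℝ (S : Set E))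
        exact ⟨0, fun a ha => by obtain ⟨w, rfl⟩ := ha; positivity⟩
    have := (norm_eq_iInf_iff_real_inner_le_zero hK hμK).mp hd
    intro x hx
    have h := this x hx
    have : ⟪(0:E) - μ, x - μ⟫ = -⟪x, μ⟫ + ‖μ‖ ^ 2 := by
      simp [inner_sub_left, inner_sub_right, real_inner_comm x μ,
        real_inner_self_eq_norm_sq]
      try ring
    linarith [this ▸ h]
  constructor
  · intro lam hlam
    have hln : (0:ℝ) < ‖lam‖ := norm_pos_iff.mpr hlam
    have h1 : (S.inf' hS fun x => ⟪x, lam⟫) ≤ ⟪μ, lam⟫ := stepA lam μ hμK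
    have h2 : ⟪μ, lam⟫ ≤ ‖μ‖ * ‖lam‖ := real_inner_le_norm μ lam
    rw [div_le_iff₀ hln]
    linarith
  · have hle : (S.inf' hS fun x => ⟪x, μ⟫) ≤ ‖μ‖ ^ 2 := by
      have := stepA μ μ hμK
      rwa [real_inner_self_eq_norm_sq] at this
    have hge : ‖μ‖ ^ 2 ≤ S.inf' hS fun x => ⟪x, μ⟫ :=
      Finset.le_inf' hS _ fun x hx => stepB x (subset_convexHull ℝ _ hx)
    have : (S.inf' hS fun x => ⟪x, μ⟫) = ‖μ‖ ^ 2 := le_antisymm hle hge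
    rw [this, sq, mul_div_assoc, div_self hμn.ne', mul_one]
end

section
/- Let V be a finite-dimensional rational module over a torus T, λ a nonzero cocharacter of T, v ∈ V a nonzero T-unstable vector with optimal direction μ(v) (the minimal-norm point of the Newton polytope K(v)), and k = m(v, λ_T(v)) where λ_T(v) is the primitive cocharacter proportional to μ(v). If v' ∈ v + ⊕_{i > k} V(λ_T(v), i), where V(λ, i) denotes the λ-weight-i subspace of V, then λ_T(v') = λ_T(v). -/
open scoped RealInnerProductSpace

/-- If `m` is a point of minimal norm in a convex set `K`, then every point of `K`
lies in the half-space `⟪x, m⟫ ≥ ‖m‖²`. -/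
lemma minnorm_inner_aux {E : Type*} [NormedAddCommGroup E] [InnerProductSpace ℝ E]
    {K : Set E} (hK : Convex ℝ K) {m : E} (hm : m ∈ K)
    (hmin : ∀ x ∈ K, ‖m‖ ≤ ‖x‖) : ∀ x ∈ K, ‖m‖ ^ 2 ≤ ⟪x, m⟫ := by
  haveI : Nonempty K := ⟨⟨m, hm⟩⟩
  have h0 : ‖(0 : E) - m‖ = ⨅ w : K, ‖(0 : E) - w‖ := by
    refine le_antisymm (le_ciInf fun w => ?_)
      (ciInf_le (f := fun w : K => ‖(0 : E) - w‖) ⟨0, fun _ ⟨_, h⟩ => h ▸ norm_nonneg _⟩ ⟨m, hm⟩)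
    simpa using hmin w w.2
  intro x hx
  have h1 := (norm_eq_iInf_iff_real_inner_le_zero hK hm).1 h0 x hx
  have h2 : ⟪(0 : E) - m, x - m⟫ = -⟪x, m⟫ + ‖m‖ ^ 2 := by
    rw [zero_sub, inner_neg_left, inner_sub_right, real_inner_self_eq_norm_sq,
      real_inner_comm]
    ring
  rw [h2] at h1
  linarith

/-- Tsujii's lemma: work in the cocharacter space of a torus `T`,
with the weights of a rational `T`-module identified with points of a
finite-dimensional real inner product space.  Let `S` be the (finite, nonempty)
set of weights of a `T`-unstable vector `v` and `μ ≠ 0` the minimal-norm point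
of its Newton polytope, so that the optimal primitive cocharacter `λ_T(v)` is
the primitive multiple of `μ` and `k = m(v, λ_T(v))` corresponds to the level
`⟪·, μ⟫ = ‖μ‖²`.  If `v' ∈ v + ⊕_{i > k} V(λ_T(v), i)`, i.e. the weight set
`S'` of `v'` agrees with `S` at all levels `⟪x, μ⟫ ≤ ‖μ‖²`, then
`λ_T(v') = λ_T(v)`: the minimal-norm point `μ'` of the Newton polytope of `v'`
equals `μ`. -/
theorem stmt5 {E : Type*} [NormedAddCommGroup E] [InnerProductSpace ℝ E]
    [FiniteDimensional ℝ E] (S S' : Finset E) (μ μ' : E)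
    (hμ : μ ∈ convexHull ℝ (S : Set E))
    (hμmin : ∀ x ∈ convexHull ℝ (S : Set E), ‖μ‖ ≤ ‖x‖)
    (hμ' : μ' ∈ convexHull ℝ (S' : Set E))
    (hμ'min : ∀ x ∈ convexHull ℝ (S' : Set E), ‖μ'‖ ≤ ‖x‖)
    (hne : μ ≠ 0)
    (hlow : {x ∈ (S : Set E) | ⟪x, μ⟫ ≤ ‖μ‖ ^ 2}
          = {x ∈ (S' : Set E) | ⟪x, μ⟫ ≤ ‖μ‖ ^ 2}) :
    μ' = μ := by
  classical
  -- Step 1: every point of conv(S) satisfies ⟪x, μ⟫ ≥ ‖μ‖².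
  have hface : ∀ x ∈ convexHull ℝ (S : Set E), ‖μ‖ ^ 2 ≤ ⟪x, μ⟫ :=
    minnorm_inner_aux (convex_convexHull ℝ _) hμ hμmin
  have hfaceS : ∀ s ∈ S, ‖μ‖ ^ 2 ≤ ⟪s, μ⟫ := fun s hs =>
    hface s (subset_convexHull ℝ _ hs)
  -- Step 2: every point of S' satisfies ⟪s, μ⟫ ≥ ‖μ‖².
  have hS' : ∀ s ∈ S', ‖μ‖ ^ 2 ≤ ⟪s, μ⟫ := by
    intro s hs
    by_cases h : ⟪s, μ⟫ ≤ ‖μ‖ ^ 2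
    · have hmem : s ∈ {x ∈ (S' : Set E) | ⟪x, μ⟫ ≤ ‖μ‖ ^ 2} := ⟨hs, h⟩
      rw [← hlow] at hmem
      exact hfaceS s hmem.1
    · linarith
  -- hence ⟪μ', μ⟫ ≥ ‖μ‖².
  have hlin : IsLinearMap ℝ (fun x : E => ⟪x, μ⟫) := by
    refine ⟨fun a b => ?_, fun c a => ?_⟩
    · exact inner_add_left a b μ
    · exact real_inner_smul_left a μ c
  have h4 : ‖μ‖ ^ 2 ≤ ⟪μ', μ⟫ :=
    convexHull_min (fun s hs => hS' s hs) (convex_halfSpace_ge hlin _) hμ'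
  -- Step 3: μ ∈ conv(S').
  obtain ⟨w, hw0, hw1, hwc⟩ := Finset.mem_convexHull.1 hμ
  have hcm : ∑ y ∈ S, w y • y = μ := by
    rw [← hwc, Finset.centerMass_eq_of_sum_1 _ _ hw1]; rfl
  have hsum : ∑ y ∈ S, w y * (⟪y, μ⟫ - ‖μ‖ ^ 2) = 0 := by
    have hinner : ∑ y ∈ S, w y * ⟪y, μ⟫ = ‖μ‖ ^ 2 := by
      have := congrArg (fun z => ⟪z, μ⟫) hcm
      simpa [sum_inner, real_inner_smul_left, real_inner_self_eq_norm_sq] using this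
    have hconst : ∑ y ∈ S, w y * ‖μ‖ ^ 2 = ‖μ‖ ^ 2 := by
      rw [← Finset.sum_mul, hw1, one_mul]
    calc ∑ y ∈ S, w y * (⟪y, μ⟫ - ‖μ‖ ^ 2)
        = ∑ y ∈ S, (w y * ⟪y, μ⟫ - w y * ‖μ‖ ^ 2) := by
          refine Finset.sum_congr rfl fun y _ => by ring
      _ = 0 := by rw [Finset.sum_sub_distrib, hinner, hconst, sub_self]
  have hzero : ∀ y ∈ S, w y * (⟪y, μ⟫ - ‖μ‖ ^ 2) = 0 := by
    rw [← Finset.sum_eq_zero_iff_of_nonneg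
      (fun y hy => mul_nonneg (hw0 y hy) (by linarith [hfaceS y hy]))]
    exact hsum
  have hsupp : ∀ y ∈ S, w y ≠ 0 → (y : E) ∈ (S' : Set E) := by
    intro y hy hwy
    have h5 : ⟪y, μ⟫ - ‖μ‖ ^ 2 = 0 := by
      rcases mul_eq_zero.1 (hzero y hy) with h | h
      · exact absurd h hwy
      · exact h
    have : y ∈ {x ∈ (S : Set E) | ⟪x, μ⟫ ≤ ‖μ‖ ^ 2} := ⟨hy, by linarith⟩
    rw [hlow] at this
    exact this.1
  have hmemS' : μ ∈ convexHull ℝ (S' : Set E) := by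
    rw [← hwc, ← Finset.centerMass_filter_ne_zero]
    refine Finset.centerMass_mem_convexHull _
      (fun y hy => hw0 y (Finset.mem_filter.1 hy).1) ?_
      (fun y hy => hsupp y (Finset.mem_filter.1 hy).1 (Finset.mem_filter.1 hy).2)
    rw [Finset.sum_filter_ne_zero, hw1]
    exact one_pos
  have h6 : ‖μ'‖ ≤ ‖μ‖ := hμ'min μ hmemS'
  -- Step 4: conclude.
  have hsq : ‖μ' - μ‖ ^ 2 ≤ 0 := by
    have hexp : ‖μ' - μ‖ ^ 2 = ‖μ'‖ ^ 2 - 2 * ⟪μ', μ⟫ + ‖μ‖ ^ 2 := by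
      rw [← real_inner_self_eq_norm_sq, inner_sub_sub_self, real_inner_self_eq_norm_sq,
        real_inner_self_eq_norm_sq, real_inner_comm μ μ']
      ring
    have h7 : ‖μ'‖ ^ 2 ≤ ‖μ‖ ^ 2 := by
      have := norm_nonneg μ'
      nlinarith
    linarith [hexp, h4, h7]
  have : μ' - μ = 0 := by
    have := norm_nonneg (μ' - μ)
    have h8 : ‖μ' - μ‖ = 0 := by nlinarith
    exact norm_eq_zero.1 h8
  exact sub_eq_zero.1 this
end

section
/- Let V be a vector space with finite weight-space decomposition indexed by a finite set of weights, let λ be a nonzero cocharacter with associated grading V = ⊕_i V(λ, i), and let v ∈ V(λ, k) for some k ∈ N. Let T be a torus whose cocharacter lattice contains λ, with inner product ( , ) on Y_Q(T), and let T^λ be the subtorus with Y_Q(T^λ) = λ^⊥. Then the minimal-norm point of the Newton polytope of v taken in Y_Q(T^λ) (i.e. after orthogonal projection onto λ^⊥) equals μ_T(v) − (k/(λ,λ)) λ, where μ_T(v) is the minimal-norm point of the Newton polytope of v in Y_Q(T). -/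
open scoped RealInnerProductSpace

/-- Slodowy: suppose all points of the finite weight set `S` of a
vector `v ∈ V(λ, k)` lie on the affine hyperplane `{x : (x, λ) = k}` for a
nonzero `λ`.  Orthogonal projection onto `λ^⊥` (the cocharacter space of the
subtorus `T^λ`) sends `x ↦ x − ((x,λ)/(λ,λ)) λ`, and the minimal-norm point of
the projected Newton polytope is `μ_T(v) − (k/(λ,λ)) λ`, where `μ_T(v)` is the
minimal-norm point of the Newton polytope of `v`. -/
theorem stmt6 {E : Type*} [NormedAddCommGroup E] [InnerProductSpace ℝ E]
    [FiniteDimensional ℝ E] (S : Finset E) (lam : E) (hlam : lam ≠ 0) (k : ℕ)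
    (hk : ∀ x ∈ S, ⟪x, lam⟫ = (k : ℝ)) (μ : E)
    (hμ : μ ∈ convexHull ℝ (S : Set E))
    (hmin : ∀ x ∈ convexHull ℝ (S : Set E), ‖μ‖ ≤ ‖x‖) :
    (μ - ((k : ℝ) / ⟪lam, lam⟫) • lam) ∈
        convexHull ℝ ((fun x => x - (⟪x, lam⟫ / ⟪lam, lam⟫) • lam) '' (S : Set E)) ∧
      ∀ y ∈ convexHull ℝ ((fun x => x - (⟪x, lam⟫ / ⟪lam, lam⟫) • lam) '' (S : Set E)),
        ‖μ - ((k : ℝ) / ⟪lam, lam⟫) • lam‖ ≤ ‖y‖ := by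
  set c : ℝ := (k : ℝ) / ⟪lam, lam⟫ with hc
  -- The projection agrees with the translation `x ↦ x - c • lam` on `S`.
  have himg : (fun x => x - (⟪x, lam⟫ / ⟪lam, lam⟫) • lam) '' (S : Set E)
      = (fun x => x - c • lam) '' (S : Set E) := by
    apply Set.image_congr
    intro x hx
    rw [hk x hx]
  -- Translation as an affine map.
  let f : E →ᵃ[ℝ] E := AffineMap.id ℝ E + AffineMap.const ℝ E (-(c • lam))
  have hf : ∀ x, f x = x - c • lam := fun x => by
    simp [f, sub_eq_add_neg]
  have himg' : (fun x => x - c • lam) '' (S : Set E) = f '' (S : Set E) := by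
    apply Set.image_congr
    intro x _
    rw [hf]
  have hhull : convexHull ℝ ((fun x => x - (⟪x, lam⟫ / ⟪lam, lam⟫) • lam) '' (S : Set E))
      = (fun x => x - c • lam) '' convexHull ℝ (S : Set E) := by
    rw [himg, himg', ← AffineMap.image_convexHull]
    apply Set.image_congr
    intro x _
    rw [hf]
  -- Every point of the hull lies on the hyperplane.
  have hhyp : ∀ x ∈ convexHull ℝ (S : Set E), ⟪x, lam⟫ = (k : ℝ) := by
    intro x hx
    have hlin : IsLinearMap ℝ (fun w : E => ⟪w, lam⟫) :=
      ⟨fun a b => inner_add_left a b lam, fun r a => real_inner_smul_left a lam r⟩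
    have hconv : Convex ℝ {w : E | ⟪w, lam⟫ = (k : ℝ)} := convex_hyperplane hlin (k : ℝ)
    exact convexHull_min (fun w hw => hk w hw) hconv hx
  constructor
  · rw [hhull]
    exact ⟨μ, hμ, rfl⟩
  · intro y hy
    rw [hhull] at hy
    obtain ⟨x, hx, rfl⟩ := hy
    have h1 : ⟪x, lam⟫ = (k : ℝ) := hhyp x hx
    have h2 : ⟪μ, lam⟫ = (k : ℝ) := hhyp μ hμ
    have h3 : ‖μ‖ ^ 2 ≤ ‖x‖ ^ 2 :=
      pow_le_pow_left₀ (norm_nonneg _) (hmin x hx) 2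
    have key : ‖μ - c • lam‖ ^ 2 ≤ ‖x - c • lam‖ ^ 2 := by
      rw [← real_inner_self_eq_norm_sq, ← real_inner_self_eq_norm_sq]
      simp only [inner_sub_sub_self, real_inner_smul_left, real_inner_smul_right,
        real_inner_comm lam x, real_inner_comm lam μ, h1, h2]
      have h1' : ⟪lam, x⟫ = (k : ℝ) := by rw [real_inner_comm]; exact h1
      have h2' : ⟪lam, μ⟫ = (k : ℝ) := by rw [real_inner_comm]; exact h2
      rw [h1', h2']
      nlinarith [real_inner_self_eq_norm_sq μ, real_inner_self_eq_norm_sq x]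
    exact (pow_le_pow_iff_left₀ (norm_nonneg _) (norm_nonneg _) two_ne_zero).mp key
end

section
/- Let G be a connected reductive group over an algebraically closed field, T a maximal torus, and λ ∈ Y(T) a nonzero primitive cocharacter. Let η be the unique (up to sign) primitive character in X(T) proportional to λ under the identification X_Q(T) ≅ Y_Q(T) via a W-invariant inner product. Then T^λ := ⟨im μ : μ ∈ Y(T), (μ, λ) = 0⟩ equals ker η, and the character group sequence 0 → X(T/T^λ) → X(T) → X(T^λ) → 0 is exact with X(T) ≅ Zη ⊕ X(T^λ). -/
/-- An element of a lattice `ℤ^n` is primitive if it is nonzero and not a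
proper integer multiple of another lattice element. -/
def IsPrimitiveVec {n : ℕ} (v : Fin n → ℤ) : Prop :=
  v ≠ 0 ∧ ∀ (d : ℤ) (w : Fin n → ℤ), v = d • w → IsUnit d

/-- The character of the split torus `T = (kˣ)^n` attached to `χ ∈ ℤ^n = X(T)`,
namely `t ↦ ∏ i, t i ^ χ i`. -/
def charHom {k : Type*} [Field k] {n : ℕ} (χ : Fin n → ℤ) :
    (Fin n → kˣ) →* kˣ where
  toFun t := ∏ i, t i ^ χ i
  map_one' := by simp
  map_mul' a b := by
    simp [Pi.mul_apply, mul_zpow, Finset.prod_mul_distrib]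

theorem prod_zpow_eq_zpow_sum {G : Type*} [CommGroup G] {ι : Type*} (s : Finset ι)
    (ξ : G) (f : ι → ℤ) : ∏ i ∈ s, ξ ^ f i = ξ ^ ∑ i ∈ s, f i := by
  classical
  induction s using Finset.induction_on with
  | empty => simp
  | insert _ _ h ih => rw [Finset.prod_insert h, Finset.sum_insert h, ih, zpow_add]

theorem bezout_of_primitive {n : ℕ} {η : Fin n → ℤ} (h : IsPrimitiveVec η) :
    ∃ v : Fin n → ℤ, ∑ i, η i * v i = 1 := by
  obtain ⟨hne, hdiv⟩ := h
  set I : Ideal ℤ := Ideal.span (Set.range η) with hI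
  have hg : ∀ i, Submodule.IsPrincipal.generator I ∣ η i := fun i =>
    (Submodule.IsPrincipal.mem_iff_generator_dvd I).mp (Ideal.subset_span ⟨i, rfl⟩)
  choose w hw using hg
  have hunit : IsUnit (Submodule.IsPrincipal.generator I) :=
    hdiv _ w (funext fun i => by simpa [Pi.smul_apply, smul_eq_mul] using hw i)
  have htop : I = ⊤ := Ideal.eq_top_of_isUnit_mem I
    (Submodule.IsPrincipal.generator_mem I) hunit
  have h1 : (1 : ℤ) ∈ I := by rw [htop]; trivial
  obtain ⟨v, hv⟩ := (Submodule.mem_span_range_iff_exists_fun ℤ).mp h1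
  refine ⟨v, ?_⟩
  rw [← hv]
  exact Finset.sum_congr rfl fun i _ => by rw [smul_eq_mul, mul_comm]

theorem zpow_eq_zero_of_forall {k : Type*} [Field k] [IsAlgClosed k] {m : ℤ}
    (h : ∀ ξ : kˣ, ξ ^ m = 1) : m = 0 := by
  by_contra hm
  have hN : 0 < m.natAbs := Int.natAbs_pos.mpr hm
  have hp : (Polynomial.X ^ m.natAbs - Polynomial.C (1:k)) ≠ 0 :=
    Polynomial.X_pow_sub_C_ne_zero hN 1
  have hfin := Polynomial.finite_setOf_isRoot hp
  have hsub : {x : k | x ≠ 0} ⊆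
      {x : k | (Polynomial.X ^ m.natAbs - Polynomial.C (1:k)).IsRoot x} := by
    intro x hx
    have hξ : (Units.mk0 x hx) ^ (m.natAbs : ℤ) = 1 := by
      rcases Int.natAbs_eq m with he | he
      · rw [← he]; exact h _
      · have := h (Units.mk0 x hx)
        rw [show ((m.natAbs : ℤ)) = -m by omega, zpow_neg, this, inv_one]
    have hx' : x ^ m.natAbs = (1:k) := by
      have h2 : (Units.mk0 x hx) ^ m.natAbs = 1 := by
        rw [← zpow_natCast]; exact hξ
      have := congrArg (Units.val) h2
      simpa using this
    simp [Polynomial.IsRoot, hx']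
  have hinf : {x : k | x ≠ 0}.Infinite := by
    have h0 : ({0} : Set k).Finite := Set.finite_singleton 0
    exact h0.infinite_compl
  exact (hinf.mono hsub) hfin

/-- let `T = (kˣ)^n` be a maximal torus (with `X(T) = Y(T) = ℤ^n`),
`b` a positive definite symmetric form on `Y_ℚ(T)` (coming from a `W`-invariant
inner product), `λ ∈ Y(T)` a nonzero primitive cocharacter, and `η ∈ X(T)` the
primitive character proportional to `λ` under the identification
`X_ℚ(T) ≅ Y_ℚ(T)` given by `b`.  Then the subgroup
`T^λ = ⟨im μ : μ ∈ Y(T), b(μ, λ) = 0⟩` equals `ker η`, and the characters of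
`T` vanishing on `T^λ` are exactly the multiples of `η`; hence
`0 → X(T/T^λ) → X(T) → X(T^λ) → 0` is exact with `X(T) ≅ ℤη ⊕ X(T^λ)`. -/
theorem stmt10 {k : Type*} [Field k] [IsAlgClosed k] (n : ℕ)
    (b : (Fin n → ℚ) →ₗ[ℚ] (Fin n → ℚ) →ₗ[ℚ] ℚ)
    (hsymm : ∀ x y, b x y = b y x) (hpos : ∀ x, x ≠ 0 → 0 < b x x)
    (lam : Fin n → ℤ) (hlamprim : IsPrimitiveVec lam)
    (η : Fin n → ℤ) (hηprim : IsPrimitiveVec η)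
    (hprop : ∃ c : ℚ, c ≠ 0 ∧ ∀ μ : Fin n → ℚ,
      (∑ i, (η i : ℚ) * μ i) = c * b (fun i => (lam i : ℚ)) μ) :
    (Subgroup.closure {t : Fin n → kˣ |
        ∃ μ : Fin n → ℤ, b (fun i => (μ i : ℚ)) (fun i => (lam i : ℚ)) = 0 ∧
          ∃ ξ : kˣ, t = fun i => ξ ^ μ i}
      = (charHom (k := k) η).ker) ∧
    ({χ : Fin n → ℤ | ∀ t ∈ (charHom (k := k) η).ker, charHom (k := k) χ t = 1}
      = {χ : Fin n → ℤ | ∃ a : ℤ, χ = a • η}) := by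
  classical
  obtain ⟨c, hc0, hcb⟩ := hprop
  obtain ⟨v, hv⟩ := bezout_of_primitive hηprim
  have hch : ∀ (χ : Fin n → ℤ) (t : Fin n → kˣ),
      charHom (k := k) χ t = ∏ i, t i ^ χ i := fun _ _ => rfl
  -- orthogonality over ℚ is the same as integral pairing with η being zero
  have key : ∀ μ : Fin n → ℤ,
      b (fun i => (μ i : ℚ)) (fun i => (lam i : ℚ)) = 0 ↔ ∑ i, η i * μ i = 0 := by
    intro μ
    have h1 := hcb (fun i => (μ i : ℚ))
    have h2 : ((∑ i, η i * μ i : ℤ) : ℚ)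
        = c * b (fun i => (lam i : ℚ)) (fun i => (μ i : ℚ)) := by
      rw [← h1]; push_cast; rfl
    rw [hsymm]
    constructor
    · intro h
      rw [h, mul_zero] at h2
      exact_mod_cast h2
    · intro h
      have : ((∑ i, η i * μ i : ℤ) : ℚ) = 0 := by exact_mod_cast h
      rw [this] at h2
      exact (mul_eq_zero.mp h2.symm).resolve_left hc0
  -- the adapted cocharacters
  set E : Fin n → Fin n → ℤ := fun a i => (if a = i then 1 else 0) - η a * v i with hEdef
  have hE : ∀ a, ∑ i, η i * E a i = 0 := by
    intro a
    have : ∑ i, η i * E a i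
        = (∑ i, if a = i then η i else 0) - η a * ∑ i, η i * v i := by
      rw [Finset.mul_sum, ← Finset.sum_sub_distrib]
      refine Finset.sum_congr rfl fun i _ => ?_
      simp only [hEdef, mul_sub, mul_ite, mul_one, mul_zero]
      ring_nf
    rw [this, Finset.sum_ite_eq Finset.univ a η, hv]
    simp
  have hE' : ∀ a, ∑ i, E a i * η i = 0 := fun a => by
    rw [← hE a]; exact Finset.sum_congr rfl fun i _ => mul_comm _ _
  constructor
  · -- first claim
    apply le_antisymm
    · rw [Subgroup.closure_le]
      rintro t ⟨μ, hbμ, ξ, rfl⟩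
      have hμ : ∑ i, μ i * η i = 0 := by
        rw [← (key μ).mp hbμ]; exact Finset.sum_congr rfl fun i _ => mul_comm _ _
      have : charHom (k := k) η (fun i => ξ ^ μ i) = 1 := by
        rw [hch]
        calc ∏ i, (ξ ^ μ i) ^ η i = ∏ i, ξ ^ (μ i * η i) := by
              exact Finset.prod_congr rfl fun i _ => (zpow_mul ξ (μ i) (η i)).symm
          _ = ξ ^ (∑ i, μ i * η i) := prod_zpow_eq_zpow_sum _ _ _
          _ = 1 := by rw [hμ, zpow_zero]
      exact this
    · intro t ht
      have ht1 : ∏ i, t i ^ η i = 1 := ht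
      have hdecomp : t = ∏ a, (fun i => t a ^ E a i) := by
        funext j
        rw [Finset.prod_apply]
        have : ∀ a, t a ^ E a j
            = (if a = j then t a else 1) * ((t a ^ η a) ^ v j)⁻¹ := by
          intro a
          simp only [hEdef, zpow_sub, zpow_mul]
          congr 1
          rcases eq_or_ne a j with h | h <;> simp [h]
        rw [Finset.prod_congr rfl fun a _ => this a, Finset.prod_mul_distrib,
          Finset.prod_ite_eq' Finset.univ j t, Finset.prod_inv_distrib,
          Finset.prod_zpow, ht1]
        simp
      rw [hdecomp]
      refine Subgroup.prod_mem _ fun a _ => Subgroup.subset_closure ?_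
      exact ⟨E a, (key (E a)).mpr (hE a), t a, rfl⟩
  · -- second claim
    ext χ
    simp only [Set.mem_setOf_eq]
    constructor
    · intro h
      refine ⟨∑ i, v i * χ i, funext fun j => ?_⟩
      have hker : ∀ ξ : kˣ, (fun i => ξ ^ E j i) ∈ (charHom (k := k) η).ker := by
        intro ξ
        show charHom (k := k) η (fun i => ξ ^ E j i) = 1
        rw [hch]
        calc ∏ i, (ξ ^ E j i) ^ η i = ∏ i, ξ ^ (E j i * η i) :=
              Finset.prod_congr rfl fun i _ => (zpow_mul ξ (E j i) (η i)).symm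
          _ = ξ ^ (∑ i, E j i * η i) := prod_zpow_eq_zpow_sum _ _ _
          _ = 1 := by rw [hE' j, zpow_zero]
      have hall : ∀ ξ : kˣ, ξ ^ (∑ i, E j i * χ i) = 1 := by
        intro ξ
        have := h _ (hker ξ)
        rw [hch] at this
        calc ξ ^ (∑ i, E j i * χ i) = ∏ i, ξ ^ (E j i * χ i) :=
              (prod_zpow_eq_zpow_sum _ _ _).symm
          _ = ∏ i, (ξ ^ E j i) ^ χ i :=
              Finset.prod_congr rfl fun i _ => zpow_mul ξ (E j i) (χ i)
          _ = 1 := this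
      have hz : ∑ i, E j i * χ i = 0 := zpow_eq_zero_of_forall hall
      have hcomp : ∑ i, E j i * χ i = χ j - η j * ∑ i, v i * χ i := by
        have : ∑ i, E j i * χ i
            = (∑ i, if j = i then χ i else 0) - η j * ∑ i, v i * χ i := by
          rw [Finset.mul_sum, ← Finset.sum_sub_distrib]
          refine Finset.sum_congr rfl fun i _ => ?_
          simp only [hEdef, sub_mul, ite_mul, one_mul, zero_mul]
          ring_nf
        rw [this, Finset.sum_ite_eq Finset.univ j χ]
        simp
      rw [hcomp] at hz
      have : χ j = η j * ∑ i, v i * χ i := by linarith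
      simp [Pi.smul_apply, smul_eq_mul, this, mul_comm]
    · rintro ⟨a, rfl⟩ t ht
      have ht1 : ∏ i, t i ^ η i = 1 := ht
      rw [hch]
      calc ∏ i, t i ^ ((a • η) i) = ∏ i, (t i ^ η i) ^ a := by
            refine Finset.prod_congr rfl fun i _ => ?_
            rw [Pi.smul_apply, smul_eq_mul, mul_comm, zpow_mul]
        _ = (∏ i, t i ^ η i) ^ a := Finset.prod_zpow _ _ _
        _ = 1 := by rw [ht1, one_zpow]
end
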